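/- For all θ ∈ ℝ, |(16/π²)·arcsin(cos(θ/2))·arcsin(sin(θ/2)) − sin(θ)| ≤ 3.21·(π/180); i.e. the piecewise-quadratic spiral-easement approximation to sin differs from sin by never more than 3.21 degrees (in radians). -/

import Mathlib

open Real

/-- Helper: a function vanishing at 0 with nonnegative derivative on `[0, ∞)` is
nonnegative on `[0, ∞)`. -/
lemma se_nonneg_of_deriv (f f' : ℝ → ℝ) (hd : ∀ y : ℝ, HasDerivAt f (f' y) y)
    (h0 : f 0 = 0) (hpos : ∀ y : ℝ, 0 < y → 0 ≤ f' y) {x : ℝ} (hx : 0 ≤ x) : 0 ≤ f x := by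
  have hmono : MonotoneOn f (Set.Ici (0:ℝ)) := by
    apply monotoneOn_of_deriv_nonneg (convex_Ici 0)
    · exact fun y _ => (hd y).continuousAt.continuousWithinAt
    · exact fun y _ => (hd y).differentiableAt.differentiableWithinAt
    · intro y hy
      rw [interior_Ici] at hy
      rw [(hd y).deriv]
      exact hpos y hy
  have := hmono (Set.self_mem_Ici) (Set.mem_Ici.2 hx) hx
  linarith [h0 ▸ this]

lemma se_sin_ge_S3 {x : ℝ} (hx : 0 ≤ x) : x - x^3/6 ≤ Real.sin x := by
  have h := se_nonneg_of_deriv (fun y => Real.sin y - (y - y^3/6))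
      (fun y => Real.cos y - (1 - y^2/2))
      (fun y => by
        have h1 : HasDerivAt (fun z : ℝ => z - z^3/6) (1 - 3*y^2/6) y := by
          have := (hasDerivAt_id y).fun_sub ((hasDerivAt_pow 3 y).div_const 6)
          exact this.congr_deriv (by push_cast; ring)
        have h2 : HasDerivAt (fun z : ℝ => z - z^3/6) (1 - y^2/2) y := by
          convert h1 using 1; ring
        exact (Real.hasDerivAt_sin y).sub h2)
      (by norm_num)
      (fun y hy => by
        have := Real.one_sub_sq_div_two_le_cos (x := y)
        linarith) hx
  simpa using h

lemma se_cos_le_C4 {x : ℝ} (hx : 0 ≤ x) : Real.cos x ≤ 1 - x^2/2 + x^4/24 := by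
  have h := se_nonneg_of_deriv (fun y => (1 - y^2/2 + y^4/24) - Real.cos y)
      (fun y => (-(y) + y^3/6) + Real.sin y)
      (fun y => by
        have h1 : HasDerivAt (fun z : ℝ => 1 - z^2/2 + z^4/24) (-(y) + y^3/6) y := by
          have := ((hasDerivAt_const y (1:ℝ)).fun_sub ((hasDerivAt_pow 2 y).div_const 2)).fun_add
            ((hasDerivAt_pow 4 y).div_const 24)
          exact this.congr_deriv (by push_cast; ring)
        have := h1.fun_sub (Real.hasDerivAt_cos y)
        exact this.congr_deriv (by ring))
      (by norm_num)
      (fun y hy => by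
        have := se_sin_ge_S3 hy.le
        nlinarith) hx
  linarith [h]

lemma se_sin_le_S5 {x : ℝ} (hx : 0 ≤ x) : Real.sin x ≤ x - x^3/6 + x^5/120 := by
  have h := se_nonneg_of_deriv (fun y => (y - y^3/6 + y^5/120) - Real.sin y)
      (fun y => (1 - y^2/2 + y^4/24) - Real.cos y)
      (fun y => by
        have h1 : HasDerivAt (fun z : ℝ => z - z^3/6 + z^5/120) (1 - y^2/2 + y^4/24) y := by
          have := ((hasDerivAt_id y).fun_sub ((hasDerivAt_pow 3 y).div_const 6)).fun_add
            ((hasDerivAt_pow 5 y).div_const 120)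
          exact this.congr_deriv (by push_cast; ring)
        exact h1.sub (Real.hasDerivAt_sin y))
      (by norm_num)
      (fun y hy => by
        have := se_cos_le_C4 hy.le
        nlinarith) hx
  linarith [h]

lemma se_cos_ge_C6 {x : ℝ} (hx : 0 ≤ x) : 1 - x^2/2 + x^4/24 - x^6/720 ≤ Real.cos x := by
  have h := se_nonneg_of_deriv (fun y => Real.cos y - (1 - y^2/2 + y^4/24 - y^6/720))
      (fun y => -Real.sin y - (-(y) + y^3/6 - y^5/120))
      (fun y => by
        have h1 : HasDerivAt (fun z : ℝ => 1 - z^2/2 + z^4/24 - z^6/720)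
            (-(y) + y^3/6 - y^5/120) y := by
          have := (((hasDerivAt_const y (1:ℝ)).fun_sub ((hasDerivAt_pow 2 y).div_const 2)).fun_add
            ((hasDerivAt_pow 4 y).div_const 24)).fun_sub ((hasDerivAt_pow 6 y).div_const 720)
          exact this.congr_deriv (by push_cast; ring)
        have := (Real.hasDerivAt_cos y).fun_sub h1
        exact this.congr_deriv (by ring))
      (by norm_num)
      (fun y hy => by
        have := se_sin_le_S5 hy.le
        nlinarith) hx
  linarith [h]

lemma se_sin_ge_S7 {x : ℝ} (hx : 0 ≤ x) :
    x - x^3/6 + x^5/120 - x^7/5040 ≤ Real.sin x := by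
  have h := se_nonneg_of_deriv (fun y => Real.sin y - (y - y^3/6 + y^5/120 - y^7/5040))
      (fun y => Real.cos y - (1 - y^2/2 + y^4/24 - y^6/720))
      (fun y => by
        have h1 : HasDerivAt (fun z : ℝ => z - z^3/6 + z^5/120 - z^7/5040)
            (1 - y^2/2 + y^4/24 - y^6/720) y := by
          have := (((hasDerivAt_id y).fun_sub ((hasDerivAt_pow 3 y).div_const 6)).fun_add
            ((hasDerivAt_pow 5 y).div_const 120)).fun_sub ((hasDerivAt_pow 7 y).div_const 5040)
          exact this.congr_deriv (by push_cast; ring)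
        exact (Real.hasDerivAt_sin y).sub h1)
      (by norm_num)
      (fun y hy => by
        have := se_cos_ge_C6 hy.le
        nlinarith) hx
  linarith [h]

/-- The approximation error function. -/
noncomputable def seF (θ : ℝ) : ℝ :=
  (16 / Real.pi ^ 2) * Real.arcsin (Real.cos (θ / 2)) * Real.arcsin (Real.sin (θ / 2))
    - Real.sin θ

lemma seF_periodic : Function.Periodic seF (2 * Real.pi) := by
  intro θ
  unfold seF
  have h2 : (θ + 2 * Real.pi) / 2 = θ / 2 + Real.pi := by ring
  rw [h2, Real.cos_add_pi, Real.sin_add_pi, Real.arcsin_neg, Real.arcsin_neg,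
    Real.sin_add_two_pi]
  ring

lemma seF_neg (θ : ℝ) : seF (-θ) = -seF θ := by
  unfold seF
  rw [neg_div, Real.cos_neg, Real.sin_neg, Real.arcsin_neg, Real.sin_neg]
  ring

lemma seF_refl (θ : ℝ) : seF (Real.pi - θ) = seF θ := by
  unfold seF
  have h2 : (Real.pi - θ) / 2 = Real.pi / 2 - θ / 2 := by ring
  rw [h2, Real.cos_pi_div_two_sub, Real.sin_pi_div_two_sub, Real.sin_pi_sub]
  ring

lemma se_key_upper {x : ℝ} (hx0 : 0 ≤ x) (hx1 : x ≤ Real.pi / 2) :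
    4 * x / Real.pi - 4 * x^2 / Real.pi^2 - Real.sin x ≤ 3.21 * (Real.pi / 180) := by
  have hπ1 : Real.pi > 3.141592 := Real.pi_gt_d6
  have hπ2 : Real.pi < 3.141593 := Real.pi_lt_d6
  have hπ0 : (0:ℝ) < Real.pi := Real.pi_pos
  have hxL : x ≤ 1.5707965 := by linarith
  have hs : x - x^3/6 + x^5/120 - x^7/5040 ≤ Real.sin x := se_sin_ge_S7 hx0
  have e1 : 4 * x / Real.pi ≤ 4 * x / 3.141592 := by
    apply div_le_div_of_nonneg_left (by linarith) (by norm_num) (by linarith)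
  have e2 : 4 * x^2 / 3.141593^2 ≤ 4 * x^2 / Real.pi^2 := by
    apply div_le_div_of_nonneg_left (by positivity) (by positivity) (by nlinarith)
  have ec : 3.21 * ((3.141592:ℝ) / 180) ≤ 3.21 * (Real.pi / 180) := by nlinarith
  have hQ2 : (0:ℝ) ≤ (2977911764134854933167999220895197612101/11843527893178800000000000000000000000000 : ℝ)
      + (-16243617693469322262481/100800000000000000000000 : ℝ) * x
      + (9806236001285627/1260000000000000000 : ℝ) * x^2
      + (137772443191/16800000000000 : ℝ) * x^3
      + (-47197/252000000 : ℝ) * x^4 + (-1/5040 : ℝ) * x^5 := by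
    nlinarith [mul_nonneg (mul_nonneg hx0 hx0) hx0, sq_nonneg x,
      mul_nonneg (mul_nonneg (sub_nonneg.2 hxL) hx0) hx0,
      mul_nonneg (mul_nonneg (mul_nonneg (sub_nonneg.2 hxL) hx0) hx0) hx0,
      mul_nonneg (mul_nonneg (mul_nonneg (mul_nonneg (sub_nonneg.2 hxL) hx0) hx0) hx0) hx0,
      sq_nonneg (x - 1.5707965)]
  have key : 4 * x / 3.141592 - 4 * x^2 / 3.141593^2
      - (x - x^3/6 + x^5/120 - x^7/5040) ≤ 3.21 * ((3.141592:ℝ) / 180) := by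
    have hid : 3.21 * ((3.141592:ℝ) / 180) - (4 * x / 3.141592 - 4 * x^2 / 3.141593^2
        - (x - x^3/6 + x^5/120 - x^7/5040))
        = (x - 0.47197)^2 * ((2977911764134854933167999220895197612101/11843527893178800000000000000000000000000 : ℝ)
        + (-16243617693469322262481/100800000000000000000000 : ℝ) * x
        + (9806236001285627/1260000000000000000 : ℝ) * x^2
        + (137772443191/16800000000000 : ℝ) * x^3
        + (-47197/252000000 : ℝ) * x^4 + (-1/5040 : ℝ) * x^5)
        + (-3096998748304318795596432785677587330085552979/2790564936074052948720000000000000000000000000000000 : ℝ) * (x - 0.47197)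
        + (4273263084001264981493351190181318910325541736578591/279056493607405294872000000000000000000000000000000000000 : ℝ) := by
      ring
    nlinarith [mul_nonneg (sq_nonneg (x - 0.47197)) hQ2, hid]
  linarith

lemma se_key_lower {x : ℝ} (hx0 : 0 ≤ x) (hx1 : x ≤ Real.pi / 2) :
    -(3.21 * (Real.pi / 180)) ≤ 4 * x / Real.pi - 4 * x^2 / Real.pi^2 - Real.sin x := by
  have hπ1 : Real.pi > 3.141592 := Real.pi_gt_d6
  have hπ2 : Real.pi < 3.141593 := Real.pi_lt_d6
  have hπ0 : (0:ℝ) < Real.pi := Real.pi_pos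
  have hxL : x ≤ 1.5707965 := by linarith
  have hs : Real.sin x ≤ x - x^3/6 + x^5/120 := se_sin_le_S5 hx0
  have e1 : 4 * x / 3.141593 ≤ 4 * x / Real.pi := by
    apply div_le_div_of_nonneg_left (by linarith) (by positivity) (by linarith)
  have e2 : 4 * x^2 / Real.pi^2 ≤ 4 * x^2 / 3.141592^2 := by
    apply div_le_div_of_nonneg_left (by positivity) (by positivity) (by nlinarith)
  have ec : 3.21 * ((3.141592:ℝ) / 180) ≤ 3.21 * (Real.pi / 180) := by nlinarith
  have hV : (0:ℝ) ≤ (2679889970396473722746222122544212666078993/930188015936581234560000000000000000000000000 : ℝ)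
      + (26023723169589300117214060897057/148044004416960000000000000000000 : ℝ) * x
      + (-70130393422351/480000000000000 : ℝ) * x^2
      + (3141593/240000000 : ℝ) * x^3 + (1/120 : ℝ) * x^4 := by
    nlinarith [sq_nonneg (x - 0.6), mul_nonneg hx0 (sq_nonneg (x - 0.8)),
      mul_nonneg (mul_nonneg hx0 hx0) hx0, sq_nonneg x, sq_nonneg (x*x),
      mul_nonneg (sub_nonneg.2 hxL) (sq_nonneg x)]
  have key : -(3.21 * ((3.141592:ℝ) / 180)) ≤ 4 * x / 3.141593 - 4 * x^2 / 3.141592^2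
      - (x - x^3/6 + x^5/120) := by
    have hid : 4 * x / 3.141593 - 4 * x^2 / 3.141592^2 - (x - x^3/6 + x^5/120)
        + 3.21 * ((3.141592:ℝ) / 180)
        = (1.5707965 - x) * ((2679889970396473722746222122544212666078993/930188015936581234560000000000000000000000000 : ℝ)
        + (26023723169589300117214060897057/148044004416960000000000000000000 : ℝ) * x
        + (-70130393422351/480000000000000 : ℝ) * x^2
        + (3141593/240000000 : ℝ) * x^3 + (1/120 : ℝ) * x^4)
        + (30496805370869275233413777877455787333921007/592176017667840000000000000000000000000000000 : ℝ) := by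
      ring
    nlinarith [mul_nonneg (sub_nonneg.2 hxL) hV, hid]
  linarith

lemma se_key {x : ℝ} (hx0 : 0 ≤ x) (hx1 : x ≤ Real.pi / 2) :
    |seF x| ≤ 3.21 * (Real.pi / 180) := by
  have hπ0 : (0:ℝ) < Real.pi := Real.pi_pos
  have ha : Real.arcsin (Real.sin (x / 2)) = x / 2 :=
    Real.arcsin_sin (by linarith) (by linarith)
  have hb : Real.arcsin (Real.cos (x / 2)) = Real.pi / 2 - x / 2 := by
    rw [← Real.sin_pi_div_two_sub]
    exact Real.arcsin_sin (by linarith) (by linarith)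
  unfold seF
  rw [ha, hb]
  have heq : (16 / Real.pi ^ 2) * (Real.pi / 2 - x / 2) * (x / 2)
      = 4 * x / Real.pi - 4 * x^2 / Real.pi^2 := by
    field_simp
    ring
  rw [heq, abs_le]
  exact ⟨se_key_lower hx0 hx1, se_key_upper hx0 hx1⟩

lemma se_key' {x : ℝ} (hx0 : 0 ≤ x) (hx1 : x ≤ Real.pi) :
    |seF x| ≤ 3.21 * (Real.pi / 180) := by
  rcases le_total x (Real.pi / 2) with h | h
  · exact se_key hx0 h
  · have := se_key (x := Real.pi - x) (by linarith) (by linarith)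
    rwa [seF_refl] at this

theorem spiral_easement_approximation_error_bound :
    ∀ θ : ℝ,
      |(16 / Real.pi ^ 2) * Real.arcsin (Real.cos (θ / 2))
          * Real.arcsin (Real.sin (θ / 2)) - Real.sin θ|
        ≤ 3.21 * (Real.pi / 180) := by
  intro θ
  have hπ0 : (0:ℝ) < Real.pi := Real.pi_pos
  show |seF θ| ≤ 3.21 * (Real.pi / 180)
  set k : ℤ := ⌊(θ + Real.pi) / (2 * Real.pi)⌋ with hk
  have h2π : (0:ℝ) < 2 * Real.pi := by linarith
  have hfl : (k:ℝ) ≤ (θ + Real.pi) / (2 * Real.pi) := Int.floor_le _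
  have hfu : (θ + Real.pi) / (2 * Real.pi) < (k:ℝ) + 1 := Int.lt_floor_add_one _
  have hl : (k:ℝ) * (2 * Real.pi) ≤ θ + Real.pi := by
    rw [le_div_iff₀ h2π] at hfl
    linarith
  have hu : θ + Real.pi < ((k:ℝ) + 1) * (2 * Real.pi) := by
    rw [div_lt_iff₀ h2π] at hfu
    linarith
  have hper : seF (θ - (k:ℝ) * (2 * Real.pi)) = seF θ :=
    seF_periodic.sub_int_mul_eq k
  rw [← hper]
  set y : ℝ := θ - (k:ℝ) * (2 * Real.pi) with hy
  have hy1 : -Real.pi ≤ y := by simp only [hy]; linarith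
  have hy2 : y ≤ Real.pi := by simp only [hy]; nlinarith
  rcases le_total 0 y with h | h
  · exact se_key' h hy2
  · have := se_key' (x := -y) (by linarith) (by linarith)
    rwa [seF_neg, abs_neg] at this
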